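/- arXiv:hep-th/0407087 — 5 statements merged into one kernel-verified Lean document; each statement's English description precedes it below -/
import Mathlib

section
/- The quartic polynomial A(τ) = E τ^4 - (4 - 6E) τ^2 - (8E - 8) τ + 4 - 3E satisfies A(τ) > 0 for all real τ if and only if E lies in the open interval (2/3, (2+√3)/3). -/
/-- The dS Taub-NUT structure function `A(τ) = E τ⁴ - (4-6E) τ² - (8E-8) τ + 4-3E`
is positive for all real `τ` iff `E ∈ (2/3, (2+√3)/3)`. -/
theorem dS_taubNUT_positivity_iff (E : ℝ) (hE : 0 < E)
    (A : ℝ → ℝ)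
    (hA : ∀ τ : ℝ, A τ = E * τ ^ 4 - (4 - 6 * E) * τ ^ 2 - (8 * E - 8) * τ + (4 - 3 * E)) :
    (∀ τ : ℝ, 0 < A τ) ↔ E ∈ Set.Ioo (2 / 3) ((2 + Real.sqrt 3) / 3) := by
  have hs : Real.sqrt 3 ^ 2 = 3 := Real.sq_sqrt (by norm_num)
  have hs0 : 0 ≤ Real.sqrt 3 := Real.sqrt_nonneg 3
  have hs1 : 1 < Real.sqrt 3 := by nlinarith [hs, hs0]
  have hs2 : Real.sqrt 3 < 2 := by nlinarith [hs, hs0]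
  constructor
  · intro hpos
    constructor
    · have h1 := hpos (-1)
      rw [hA] at h1
      nlinarith [h1]
    · have h2 := hpos (2 - Real.sqrt 3)
      rw [hA] at h2
      by_contra hle
      push_neg at hle
      have hs3 : Real.sqrt 3 ^ 3 = 3 * Real.sqrt 3 := by
        nlinarith [hs]
      have hs4 : Real.sqrt 3 ^ 4 = 9 := by nlinarith [hs]
      have h5 : 0 < 72 * Real.sqrt 3 - 120 := by nlinarith [hs, hs0]
      nlinarith [h2, hs, hs3, hs4, mul_nonneg (sub_nonneg.2 hle) h5.le]
  · rintro ⟨hl, hr⟩ τ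
    rw [hA]
    have h1 : 0 < 3 * E - 2 := by linarith
    have h2 : 0 < 12 * E - 9 * E ^ 2 - 1 := by
      have h3 : 3 * E - 2 < Real.sqrt 3 := by linarith
      nlinarith [h3, hs, hs0]
    have h31 : 0 < 3 * E - 1 := by linarith
    have haE : 0 < 4 * E ^ 2 * (3 * E - 1) / 3 := by positivity
    nlinarith [sq_nonneg (E * τ ^ 2 + E - 4 / 3),
      sq_nonneg (4 * E * (3 * E - 1) / 3 * τ + 4 * E * (1 - E)),
      mul_pos (mul_pos hE h1) h2, haE, hE,
      mul_pos hE h31]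
end

section
/- For E = (2+√3)/3, the polynomial A(τ) = E τ^4 - (4 - 6E) τ^2 - (8E - 8) τ + 4 - 3E satisfies A(τ) ≥ 0 for all real τ, with A(τ₊) = 0 and A'(τ₊) = 0 at τ₊ = 2 - √3. -/
/-- At the extreme value `E = (2+√3)/3`, the dS Taub-NUT structure function
`A(τ) = E τ⁴ - (4-6E) τ² - (8E-8) τ + 4-3E` is nonnegative, with a degenerate zero
at `τ₊ = 2 - √3` (i.e. `A(τ₊) = 0` and `A'(τ₊) = 0`). -/
theorem dS_taubNUT_extreme_upper (E : ℝ) (hE : E = (2 + Real.sqrt 3) / 3)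
    (A : ℝ → ℝ)
    (hA : ∀ τ : ℝ, A τ = E * τ ^ 4 - (4 - 6 * E) * τ ^ 2 - (8 * E - 8) * τ + (4 - 3 * E)) :
    (∀ τ : ℝ, 0 ≤ A τ) ∧ A (2 - Real.sqrt 3) = 0 ∧ deriv A (2 - Real.sqrt 3) = 0 := by
  set s : ℝ := Real.sqrt 3 with hs
  have hs2 : s ^ 2 = 3 := Real.sq_sqrt (by norm_num)
  have hs0 : (0:ℝ) ≤ s := Real.sqrt_nonneg 3
  refine ⟨?_, ?_, ?_⟩
  · intro τ
    rw [hA, hE]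
    have key : 3 * (2 + s) * ((2 + s) / 3 * τ ^ 4 - (4 - 6 * ((2 + s) / 3)) * τ ^ 2
        - (8 * ((2 + s) / 3) - 8) * τ + (4 - 3 * ((2 + s) / 3)))
        = (τ - 2 + s) ^ 2 * (((2 + s) * τ + 1) ^ 2 + 20 + 12 * s) := by
      linear_combination (-s ^ 2 * τ ^ 2 - 2 * s * τ ^ 3 - 2 * s * τ - 12 * s
        - 4 * τ ^ 3 + 7 * τ ^ 2 - 28 * τ + 24) * hs2
    have hq : 0 ≤ (τ - 2 + s) ^ 2 * (((2 + s) * τ + 1) ^ 2 + 20 + 12 * s) := by positivity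
    nlinarith [key, hq, hs0]
  · rw [hA, hE]
    have : s ^ 4 = 9 := by nlinarith
    nlinarith [hs2, this]
  · have hA' : A = fun τ => E * τ ^ 4 - (4 - 6 * E) * τ ^ 2 - (8 * E - 8) * τ + (4 - 3 * E) :=
      funext hA
    have hd : HasDerivAt A (E * (4 * (2 - s) ^ 3) - (4 - 6 * E) * (2 * (2 - s))
        - (8 * E - 8) * 1) (2 - s) := by
      rw [hA']
      have h1 : HasDerivAt (fun τ : ℝ => E * τ ^ 4) (E * (4 * (2 - s) ^ 3)) (2 - s) := by
        simpa using (hasDerivAt_pow 4 (2 - s)).const_mul E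
      have h2 : HasDerivAt (fun τ : ℝ => (4 - 6 * E) * τ ^ 2)
          ((4 - 6 * E) * (2 * (2 - s))) (2 - s) := by
        simpa using (hasDerivAt_pow 2 (2 - s)).const_mul (4 - 6 * E)
      have h3 : HasDerivAt (fun τ : ℝ => (8 * E - 8) * τ) ((8 * E - 8) * 1) (2 - s) := by
        simpa using (hasDerivAt_id (2 - s)).const_mul (8 * E - 8)
      exact ((h1.sub h2).sub h3).add_const _
    rw [hd.deriv, hE]
    nlinarith [hs2]
end

section
/- For E outside the closed interval [2/3, (2+√3)/3] with E > 0, the polynomial A(τ) = E τ^4 - (4 - 6E) τ^2 - (8E - 8) τ + 4 - 3E has a real zero. -/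
/-- For `E > 0` outside `[2/3, (2+√3)/3]`, the dS Taub-NUT structure function
`A(τ)` has a real zero (corresponding to a horizon). -/
theorem dS_taubNUT_horizon_exists (E : ℝ) (hE : 0 < E)
    (hout : E ∉ Set.Icc (2 / 3) ((2 + Real.sqrt 3) / 3))
    (A : ℝ → ℝ)
    (hA : ∀ τ : ℝ, A τ = E * τ ^ 4 - (4 - 6 * E) * τ ^ 2 - (8 * E - 8) * τ + (4 - 3 * E)) :
    ∃ τ : ℝ, A τ = 0 := by
  have hAeq : A = fun τ : ℝ => E * τ ^ 4 - (4 - 6 * E) * τ ^ 2 - (8 * E - 8) * τ + (4 - 3 * E) :=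
    funext hA
  have hcont : ContinuousOn A (Set.univ) := by
    rw [hAeq]; fun_prop
  have s2 : Real.sqrt 3 ^ 2 = 3 := Real.sq_sqrt (by norm_num)
  have s1 : (1 : ℝ) < Real.sqrt 3 := by
    nlinarith [Real.sqrt_nonneg 3, s2]
  have s2' : Real.sqrt 3 < 2 := by
    nlinarith [Real.sqrt_nonneg 3, s2]
  simp only [Set.mem_Icc, not_and_or, not_le] at hout
  rcases hout with h | h
  · -- E < 2/3 : A(-1) < 0 ≤ A(0)
    have h1 : A (-1) ≤ 0 := by rw [hA]; nlinarith
    have h0 : 0 ≤ A 0 := by rw [hA]; nlinarith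
    have := intermediate_value_Icc (by norm_num : (-1:ℝ) ≤ 0) (hcont.mono (Set.subset_univ _))
    have hmem : (0:ℝ) ∈ Set.Icc (A (-1)) (A 0) := ⟨h1, h0⟩
    obtain ⟨τ, _, hτ⟩ := this hmem
    exact ⟨τ, hτ⟩
  · -- E > (2+√3)/3 : A(2-√3) < 0 ≤ A 2
    have hle : (2 - Real.sqrt 3 : ℝ) ≤ 2 := by linarith [Real.sqrt_nonneg 3]
    have h1 : A (2 - Real.sqrt 3) ≤ 0 := by
      rw [hA]
      have key : E * (2 - Real.sqrt 3) ^ 4 - (4 - 6 * E) * (2 - Real.sqrt 3) ^ 2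
          - (8 * E - 8) * (2 - Real.sqrt 3) + (4 - 3 * E)
          = 24 * E * (5 - 3 * Real.sqrt 3) + 8 * (Real.sqrt 3 - 1) := by
        linear_combination (E * Real.sqrt 3 ^ 2 - 8 * E * Real.sqrt 3 + 33 * E - 4) * s2
      rw [key]
      have hgt : (2 + Real.sqrt 3) / 3 < E := h
      nlinarith [s2, s1, s2']
    have h0 : 0 ≤ A 2 := by rw [hA]; nlinarith
    have := intermediate_value_Icc hle (hcont.mono (Set.subset_univ _))
    obtain ⟨τ, _, hτ⟩ := this ⟨h1, h0⟩
    exact ⟨τ, hτ⟩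
end

section
/- For E in the interval (1, (2+√3)/3), the de Sitter Taub-NUT mass m^{dS}(E) = (l/2)√E (E - 1) is strictly positive, while the metric parameter E lies in the range (2/3, (2+√3)/3) where the dS Taub-NUT spacetime is globally regular. Hence there exist E with m^{dS}(E) > 0 = m₀, giving a counterexample to the maximal mass conjecture. -/
/-- For `E ∈ (1, (2+√3)/3)` the dS Taub-NUT mass `m^{dS}(E) = (l/2)√E (E-1)` is
strictly positive while `E` lies in the range `(2/3, (2+√3)/3)` of global regularity;
hence there exists `E` in the regular range with `m^{dS}(E) > 0 = m₀`, contradicting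
the maximal mass conjecture. -/
theorem dS_taubNUT_maximal_mass_counterexample (l : ℝ) (hl : 0 < l)
    (mdS : ℝ → ℝ)
    (hmdS : ∀ E : ℝ, mdS E = (l / 2) * Real.sqrt E * (E - 1)) :
    (∀ E ∈ Set.Ioo (1 : ℝ) ((2 + Real.sqrt 3) / 3),
        0 < mdS E ∧ E ∈ Set.Ioo (2 / 3 : ℝ) ((2 + Real.sqrt 3) / 3)) ∧
    ∃ E ∈ Set.Ioo (2 / 3 : ℝ) ((2 + Real.sqrt 3) / 3), mdS E > 0 := by
  have hs3 : (1 : ℝ) < Real.sqrt 3 := by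
    rw [show (1:ℝ) = Real.sqrt 1 by simp]
    exact Real.sqrt_lt_sqrt (by norm_num) (by norm_num)
  have key : ∀ E ∈ Set.Ioo (1 : ℝ) ((2 + Real.sqrt 3) / 3),
      0 < mdS E ∧ E ∈ Set.Ioo (2 / 3 : ℝ) ((2 + Real.sqrt 3) / 3) := by
    intro E hE
    obtain ⟨h1, h2⟩ := hE
    refine ⟨?_, by linarith, h2⟩
    rw [hmdS]
    have : 0 < Real.sqrt E := Real.sqrt_pos.mpr (by linarith)
    have : 0 < l / 2 * Real.sqrt E := by positivity
    nlinarith [Real.sq_sqrt (show (0:ℝ) ≤ 3 by norm_num), Real.sqrt_nonneg 3]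
  refine ⟨key, 1.1, ⟨by norm_num, ?_⟩, (key 1.1 ⟨by norm_num, ?_⟩).1⟩ <;>
  · rw [lt_div_iff₀ (by norm_num)]
    nlinarith [Real.sq_sqrt (show (0:ℝ) ≤ 3 by norm_num), Real.sqrt_nonneg 3]
end

section
/- Let φ : [ρ₀, ∞) → ℝ be differentiable with φ'(ρ) ≤ -ρ φ(ρ)²/3 for all ρ ≥ ρ₀ > 0, and suppose φ(ρ) is defined and finite for all ρ ≥ ρ₀. Then φ(ρ) ≥ 0 for all ρ, and moreover φ(ρ) ≤ 6/(ρ² - ρ₀²) for ρ > ρ₀, so φ(ρ) → 0 as ρ → ∞. -/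
/-- Auxiliary: on any convex subset of `[ρ₀,∞)` where `φ` doesn't vanish, the function
`x ↦ (φ x)⁻¹ - x²/6` is monotone. -/
lemma riccati_aux_mono (ρ₀ : ℝ) (φ : ℝ → ℝ)
    (hdiff : ∀ ρ ∈ Set.Ici ρ₀, DifferentiableAt ℝ φ ρ)
    (hineq : ∀ ρ ∈ Set.Ici ρ₀, deriv φ ρ ≤ -ρ * (φ ρ) ^ 2 / 3)
    (s : Set ℝ) (hconv : Convex ℝ s) (hs : s ⊆ Set.Ici ρ₀)
    (hne : ∀ x ∈ s, φ x ≠ 0) :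
    MonotoneOn (fun x => (φ x)⁻¹ - x ^ 2 / 6) s := by
  have hdiffg : ∀ x ∈ s, DifferentiableAt ℝ (fun x => (φ x)⁻¹ - x ^ 2 / 6) x := by
    intro x hx
    exact ((hdiff x (hs hx)).inv (hne x hx)).sub (by fun_prop)
  apply monotoneOn_of_deriv_nonneg hconv
  · exact fun x hx => (hdiffg x hx).continuousAt.continuousWithinAt
  · exact fun x hx => (hdiffg x (interior_subset hx)).differentiableWithinAt
  · intro x hx
    have hxs : x ∈ s := interior_subset hx
    have hφx := hne x hxs
    have hd := hdiff x (hs hxs)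
    have hderiv : deriv (fun x => (φ x)⁻¹ - x ^ 2 / 6) x
        = -deriv φ x / (φ x) ^ 2 - x / 3 := by
      rw [deriv_fun_sub (f := fun y => (φ y)⁻¹) (g := fun y => y ^ 2 / 6) (hd.inv hφx) (by fun_prop), deriv_fun_inv'' hd hφx,
        deriv_div_const, deriv_pow_field]
      ring
    rw [hderiv]
    have h1 := hineq x (hs hxs)
    have hφ2 : (0:ℝ) < (φ x) ^ 2 := by positivity
    rw [sub_nonneg, le_div_iff₀ hφ2]
    nlinarith

/-- If `φ` is globally defined on `[ρ₀, ∞)` with `ρ₀ > 0` and satisfies the Riccati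
inequality `φ' ≤ -ρ φ²/3`, then `φ ≥ 0` everywhere and `φ(ρ) ≤ 6/(ρ² - ρ₀²)` for
`ρ > ρ₀`; in particular `φ(ρ) → 0` as `ρ → ∞`. -/
theorem riccati_global_decay (ρ₀ : ℝ) (hρ₀ : 0 < ρ₀) (φ : ℝ → ℝ)
    (hdiff : ∀ ρ ∈ Set.Ici ρ₀, DifferentiableAt ℝ φ ρ)
    (hineq : ∀ ρ ∈ Set.Ici ρ₀, deriv φ ρ ≤ -ρ * (φ ρ) ^ 2 / 3) :
    (∀ ρ ∈ Set.Ici ρ₀, 0 ≤ φ ρ) ∧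
    (∀ ρ : ℝ, ρ₀ < ρ → φ ρ ≤ 6 / (ρ ^ 2 - ρ₀ ^ 2)) ∧
    Filter.Tendsto φ Filter.atTop (nhds 0) := by
  -- φ is antitone on [ρ₀, ∞)
  have hanti : AntitoneOn φ (Set.Ici ρ₀) := by
    apply antitoneOn_of_deriv_nonpos (convex_Ici ρ₀)
    · exact fun x hx => (hdiff x hx).continuousAt.continuousWithinAt
    · exact fun x hx =>
        (hdiff x (le_of_lt (by simpa using hx))).differentiableWithinAt
    · intro x hx
      rw [interior_Ici] at hx
      have hx' : ρ₀ ≤ x := le_of_lt hx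
      have := hineq x hx'
      nlinarith [sq_nonneg (φ x), hρ₀.trans hx]
  -- Nonnegativity
  have hpos : ∀ ρ ∈ Set.Ici ρ₀, 0 ≤ φ ρ := by
    intro ρ₁ hρ₁
    by_contra hneg
    push_neg at hneg
    -- φ is negative on [ρ₁, ∞)
    have hsub : Set.Ici ρ₁ ⊆ Set.Ici ρ₀ := Set.Ici_subset_Ici.2 hρ₁
    have hnegall : ∀ x ∈ Set.Ici ρ₁, φ x < 0 := fun x hx =>
      lt_of_le_of_lt (hanti hρ₁ (hsub hx) hx) hneg
    have hmono := riccati_aux_mono ρ₀ φ hdiff hineq (Set.Ici ρ₁) (convex_Ici ρ₁)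
      hsub (fun x hx => (hnegall x hx).ne)
    set ρ₂ : ℝ := Real.sqrt (ρ₁ ^ 2 - 6 * (φ ρ₁)⁻¹) with hρ₂def
    have hρ₁pos : 0 < ρ₁ := hρ₀.trans_le hρ₁
    have hinvneg : (φ ρ₁)⁻¹ < 0 := inv_neg''.2 hneg
    have harg : ρ₁ ^ 2 ≤ ρ₁ ^ 2 - 6 * (φ ρ₁)⁻¹ := by nlinarith
    have hρ₂sq : ρ₂ ^ 2 = ρ₁ ^ 2 - 6 * (φ ρ₁)⁻¹ := by
      rw [hρ₂def, Real.sq_sqrt (by nlinarith)]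
    have hρ₂ge : ρ₁ ≤ ρ₂ := by
      rw [hρ₂def]
      calc ρ₁ = Real.sqrt (ρ₁ ^ 2) := by
              rw [Real.sqrt_sq hρ₁pos.le]
        _ ≤ _ := Real.sqrt_le_sqrt harg
    have h2 := hmono (Set.self_mem_Ici) (a := ρ₁) (b := ρ₂) (Set.mem_Ici.2 hρ₂ge) hρ₂ge
    have hinv2 : (φ ρ₂)⁻¹ < 0 := inv_neg''.2 (hnegall ρ₂ (Set.mem_Ici.2 hρ₂ge))
    simp only at h2
    rw [hρ₂sq] at h2
    nlinarith
  -- The quantitative bound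
  have hbound : ∀ ρ : ℝ, ρ₀ < ρ → φ ρ ≤ 6 / (ρ ^ 2 - ρ₀ ^ 2) := by
    intro ρ hρ
    have hden : 0 < ρ ^ 2 - ρ₀ ^ 2 := by nlinarith
    rcases eq_or_lt_of_le (hpos ρ (le_of_lt hρ)) with h0 | hφpos
    · rw [← h0]; positivity
    · -- φ > 0 on [ρ₀, ρ]
      have hposall : ∀ x ∈ Set.Icc ρ₀ ρ, 0 < φ x := fun x hx =>
        lt_of_lt_of_le hφpos (hanti hx.1 (le_of_lt hρ) hx.2)
      have hmono := riccati_aux_mono ρ₀ φ hdiff hineq (Set.Icc ρ₀ ρ) (convex_Icc _ _)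
        (fun x hx => hx.1) (fun x hx => (hposall x hx).ne')
      have h2 := hmono (Set.left_mem_Icc.2 hρ.le) (Set.right_mem_Icc.2 hρ.le) hρ.le
      simp only at h2
      have hinv0 : 0 < (φ ρ₀)⁻¹ :=
        inv_pos.2 (hposall ρ₀ (Set.left_mem_Icc.2 hρ.le))
      have hinv : (ρ ^ 2 - ρ₀ ^ 2) / 6 ≤ (φ ρ)⁻¹ := by nlinarith
      rw [le_div_iff₀ hden]
      have hkey := mul_le_mul_of_nonneg_left hinv hφpos.le
      rw [mul_inv_cancel₀ hφpos.ne'] at hkey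
      nlinarith
  refine ⟨hpos, hbound, ?_⟩
  -- Squeeze
  have htend : Filter.Tendsto (fun ρ : ℝ => 6 / (ρ ^ 2 - ρ₀ ^ 2))
      Filter.atTop (nhds 0) := by
    apply Filter.Tendsto.div_atTop tendsto_const_nhds
    apply Filter.tendsto_atTop_add_const_right
    exact Filter.tendsto_pow_atTop (by norm_num)
  apply tendsto_of_tendsto_of_tendsto_of_le_of_le' tendsto_const_nhds htend
  · filter_upwards [Filter.eventually_ge_atTop ρ₀] with x hx
    exact hpos x hx
  · filter_upwards [Filter.eventually_gt_atTop ρ₀] with x hx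
    exact hbound x hx
end
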